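/- Let A be a nonzero k × k complex matrix of the form A = B D B^{-1} where D is the diagonal matrix with entries iβ₁, …, iβ_k for real numbers β_j not all zero, and B ∈ GL(k,ℂ). Then there exists t₀ ∈ ℝ such that ‖exp(t₀ A) − I‖ ≥ 2/√k, where ‖·‖ is the Frobenius norm. -/

import Mathlib

/-- The Frobenius (Euclidean) norm of a `k × k` complex matrix. -/
noncomputable def frobeniusNorm {k : ℕ} (C : Matrix (Fin k) (Fin k) ℂ) : ℝ :=
  Real.sqrt (∑ i, ∑ j, ‖C i j‖ ^ 2)

/-- Trace bound: `|tr C| ≤ √k ‖C‖_F`. -/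
lemma abs_trace_le_sqrt_mul_frobeniusNorm {k : ℕ} (C : Matrix (Fin k) (Fin k) ℂ) :
    ‖C.trace‖ ≤ Real.sqrt k * frobeniusNorm C := by
  have h1 : ‖C.trace‖ ≤ ∑ i, ‖C i i‖ := by
    simpa [Matrix.trace, Matrix.diag] using
      norm_sum_le Finset.univ (fun i => C i i)
  have h2 : (∑ i, ‖C i i‖) ^ 2 ≤ (k : ℝ) * ∑ i, ‖C i i‖ ^ 2 := by
    simpa using sq_sum_le_card_mul_sum_sq (s := (Finset.univ : Finset (Fin k)))
      (f := fun i => ‖C i i‖)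
  have h3 : (∑ i, ‖C i i‖ ^ 2) ≤ ∑ i, ∑ j, ‖C i j‖ ^ 2 := by
    refine Finset.sum_le_sum fun i _ => ?_
    exact Finset.single_le_sum (f := fun j => ‖C i j‖ ^ 2)
      (fun j _ => by positivity) (Finset.mem_univ i)
  have h4 : (∑ i, ‖C i i‖) ^ 2 ≤ (k : ℝ) * ∑ i, ∑ j, ‖C i j‖ ^ 2 := by
    refine h2.trans ?_
    exact mul_le_mul_of_nonneg_left h3 (by positivity)
  have h5 : (∑ i, ‖C i i‖) ≤
      Real.sqrt ((k : ℝ) * ∑ i, ∑ j, ‖C i j‖ ^ 2) := by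
    have h6 := Real.sqrt_le_sqrt h4
    rwa [Real.sqrt_sq (by positivity)] at h6
  calc ‖C.trace‖ ≤ ∑ i, ‖C i i‖ := h1
    _ ≤ Real.sqrt ((k : ℝ) * ∑ i, ∑ j, ‖C i j‖ ^ 2) := h5
    _ = Real.sqrt k * frobeniusNorm C := by
        rw [Real.sqrt_mul (by positivity)]; rfl

/-- If `A ≠ 0` is a `k × k` complex matrix of the form `A = B (i·diag β) B⁻¹` with
`β : Fin k → ℝ` not all zero and `B` invertible, then there is `t₀ ∈ ℝ` with
`‖exp(t₀ A) − I‖ ≥ 2/√k` in the Frobenius norm. -/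
theorem exists_time_frobeniusNorm_exp_sub_one_ge (k : ℕ) (hk : 0 < k)
    (β : Fin k → ℝ) (hβ : ∃ j, β j ≠ 0)
    (B A : Matrix (Fin k) (Fin k) ℂ) (hB : IsUnit B)
    (hA : A = B * Matrix.diagonal (fun j => Complex.I * β j) * B⁻¹)
    (hA0 : A ≠ 0) :
    ∃ t₀ : ℝ, 2 / Real.sqrt k ≤ frobeniusNorm (NormedSpace.exp (t₀ • A) - 1) := by
  obtain ⟨j, hj⟩ := hβ
  set t₀ : ℝ := Real.pi / β j with ht₀
  refine ⟨t₀, ?_⟩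
  set C : Matrix (Fin k) (Fin k) ℂ := NormedSpace.exp (t₀ • A) - 1 with hC
  -- exp of the conjugated diagonal
  have hsmul : t₀ • A = B * Matrix.diagonal (fun l => (t₀ : ℂ) * (Complex.I * β l)) * B⁻¹ := by
    have hdiag : (Matrix.diagonal fun l => (t₀ : ℂ) * (Complex.I * β l))
        = t₀ • Matrix.diagonal (fun l => Complex.I * (β l : ℂ)) := by
      ext i l
      by_cases h : i = l <;>
        simp [Matrix.diagonal_apply, h, Matrix.smul_apply, Complex.real_smul]
    rw [hA, hdiag, mul_smul_comm, smul_mul_assoc]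
  have hexp : NormedSpace.exp (t₀ • A)
      = B * Matrix.diagonal (fun l => Complex.exp ((t₀ : ℂ) * (Complex.I * β l))) * B⁻¹ := by
    rw [hsmul, Matrix.exp_conj B _ hB, Matrix.exp_diagonal]
    congr 2
    rw [Pi.exp_def]
    ext l
    simp [← Complex.exp_eq_exp_ℂ]
  -- trace computation
  have hBdet : IsUnit B.det := (Matrix.isUnit_iff_isUnit_det B).mp hB
  have htr : C.trace = ∑ l, (Complex.exp ((t₀ : ℂ) * (Complex.I * β l)) - 1) := by
    rw [hC, Matrix.trace_sub, hexp, Matrix.trace_mul_cycle, Matrix.nonsing_inv_mul B hBdet,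
      Matrix.one_mul, Matrix.trace_diagonal]
    rw [Finset.sum_sub_distrib]
    simp [Matrix.trace_one]
  -- real part bound
  have hre : ∀ l, (Complex.exp ((t₀ : ℂ) * (Complex.I * β l)) - 1).re
      = Real.cos (t₀ * β l) - 1 := by
    intro l
    have : (t₀ : ℂ) * (Complex.I * (β l : ℂ)) = ((t₀ * β l : ℝ) : ℂ) * Complex.I := by
      push_cast; ring
    rw [this]
    simp only [Complex.sub_re, Complex.one_re, Complex.exp_ofReal_mul_I_re]
  have hterm : ∀ l, (Complex.exp ((t₀ : ℂ) * (Complex.I * β l)) - 1).re ≤ 0 := by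
    intro l; rw [hre l]; have := Real.cos_le_one (t₀ * β l); linarith
  have hj2 : (Complex.exp ((t₀ : ℂ) * (Complex.I * β j)) - 1).re = -2 := by
    rw [hre j]
    have : t₀ * β j = Real.pi := by rw [ht₀]; field_simp
    rw [this, Real.cos_pi]; norm_num
  have hretr : C.trace.re ≤ -2 := by
    rw [htr, Complex.re_sum]
    have hsplit := Finset.add_sum_erase Finset.univ
      (fun l => (Complex.exp ((t₀ : ℂ) * (Complex.I * β l)) - 1).re) (Finset.mem_univ j)
    have hle : ∑ l ∈ Finset.univ.erase j,
        (Complex.exp ((t₀ : ℂ) * (Complex.I * β l)) - 1).re ≤ 0 :=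
      Finset.sum_nonpos fun l _ => hterm l
    rw [← hsplit]
    linarith [hj2]
  have habs : (2 : ℝ) ≤ ‖C.trace‖ := by
    have h1 : |C.trace.re| ≤ ‖C.trace‖ := Complex.abs_re_le_norm _
    have : (2 : ℝ) ≤ |C.trace.re| := by
      rw [abs_le'] at *
      rcases abs_cases C.trace.re with ⟨h, _⟩ | ⟨h, _⟩ <;> linarith
    linarith
  have hfrob := abs_trace_le_sqrt_mul_frobeniusNorm C
  have hk' : (0 : ℝ) < Real.sqrt k := Real.sqrt_pos.mpr (by exact_mod_cast hk)
  rw [div_le_iff₀ hk']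
  calc (2 : ℝ) ≤ ‖C.trace‖ := habs
    _ ≤ Real.sqrt k * frobeniusNorm C := hfrob
    _ = frobeniusNorm C * Real.sqrt k := mul_comm _ _
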